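/- Limit of the Nested Softmax Edge Selector (auxiliary claim in the proof of Proposition 'Good_Properties_Uncrossable'): Let B ∈ ℕ₊ with B ≥ 2 and let i, j ∈ [B]₊ be distinct. Then lim_{η→∞} SM( η · ( (1 − SM(η e_i)) ⊙ SM(η e_j) ) )_j = 1, where ⊙ is the componentwise product; explicitly, the j-th coordinate equals exp(η·e^η(e^η+B−2)/(e^η+B−1)²) divided by [ exp(η·(B−1)/(e^η+B−1)²) + exp(η·e^η(e^η+B−2)/(e^η+B−1)²) + (B−2)·exp(η·(e^η+B−2)/(e^η+B−1)²) ], and this quantity tends to 1 as η → ∞. Consequently, SM( η·((1 − SM(η e_i)) ⊙ SM(η e_j)) ) converges to e_j in ℓ¹ as η → ∞. -/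

import Mathlib

/-!
Statement 19: Limit of the Nested Softmax Edge Selector
(auxiliary claim in the proof of Proposition `Good_Properties_Uncrossable`).
-/

open Filter

/-- Softmax on `ℝ^n`. -/
noncomputable def softmax {n : ℕ} (w : Fin n → ℝ) : Fin n → ℝ :=
  fun i => Real.exp (w i) / ∑ j, Real.exp (w j)

/-- The nested softmax edge selector `SM(η((1 − SM(η e_i)) ⊙ SM(η e_j)))`. -/
noncomputable def nestedSel (B : ℕ) (η : ℝ) (i j : Fin B) : Fin B → ℝ :=
  softmax (fun m =>
    η * ((1 - softmax (η • (Pi.single i 1 : Fin B → ℝ)) m) *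
          softmax (η • (Pi.single j 1 : Fin B → ℝ)) m))

lemma aux_softmax_single {B : ℕ} (i m : Fin B) (η : ℝ) :
    softmax (η • (Pi.single i 1 : Fin B → ℝ)) m =
      (if m = i then Real.exp η else 1) / (Real.exp η + ((B:ℝ) - 1)) := by
  unfold softmax
  have h : ∀ k : Fin B, Real.exp ((η • (Pi.single i 1 : Fin B → ℝ)) k)
      = (if k = i then Real.exp η - 1 else 0) + 1 := by
    intro k
    by_cases hk : k = i <;> simp [hk, Pi.single_apply]
  have hsum : ∑ k, Real.exp ((η • (Pi.single i 1 : Fin B → ℝ)) k)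
      = Real.exp η + ((B:ℝ) - 1) := by
    simp_rw [h, Finset.sum_add_distrib, Finset.sum_ite_eq' Finset.univ i,
      Finset.sum_const, Finset.card_univ, Fintype.card_fin]
    simp
    ring
  rw [hsum]
  congr 1
  by_cases hm : m = i <;> simp [hm, Pi.single_apply]

lemma aux_softmax_sum_one {B : ℕ} (i : Fin B) (w : Fin B → ℝ) :
    ∑ m, softmax w m = 1 := by
  unfold softmax
  rw [← Finset.sum_div, div_self]
  exact ne_of_gt (Finset.sum_pos (fun k _ => Real.exp_pos _) ⟨i, Finset.mem_univ i⟩)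

/-- the three exponents -/
noncomputable def gI (B : ℕ) (η : ℝ) : ℝ :=
  η * ((B : ℝ) - 1) / (Real.exp η + (B : ℝ) - 1) ^ 2
noncomputable def gJ (B : ℕ) (η : ℝ) : ℝ :=
  η * (Real.exp η * (Real.exp η + (B : ℝ) - 2)) / (Real.exp η + (B : ℝ) - 1) ^ 2
noncomputable def gO (B : ℕ) (η : ℝ) : ℝ :=
  η * (Real.exp η + (B : ℝ) - 2) / (Real.exp η + (B : ℝ) - 1) ^ 2

lemma nestedSel_eq (B : ℕ) (hB : 2 ≤ B) (i j : Fin B) (hij : i ≠ j) (η : ℝ) (m : Fin B) :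
    nestedSel B η i j m =
      Real.exp (if m = i then gI B η else if m = j then gJ B η else gO B η) /
        (Real.exp (gI B η) + Real.exp (gJ B η) + ((B:ℝ) - 2) * Real.exp (gO B η)) := by
  have hBR : (2:ℝ) ≤ (B:ℝ) := by exact_mod_cast hB
  have hS : (0:ℝ) < Real.exp η + ((B:ℝ) - 1) := by
    have := Real.exp_pos η; linarith
  have hS' : Real.exp η + ((B:ℝ) - 1) ≠ 0 := ne_of_gt hS
  have halg : ∀ a b : ℝ,
      η * ((1 - a / (Real.exp η + ((B:ℝ) - 1))) * (b / (Real.exp η + ((B:ℝ) - 1))))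
        = η * ((Real.exp η + ((B:ℝ) - 1) - a) * b) / (Real.exp η + ((B:ℝ) - 1)) ^ 2 := by
    intro a b; field_simp
  have harg : ∀ k : Fin B,
      η * ((1 - softmax (η • (Pi.single i 1 : Fin B → ℝ)) k) *
          softmax (η • (Pi.single j 1 : Fin B → ℝ)) k)
        = if k = i then gI B η else if k = j then gJ B η else gO B η := by
    intro k
    rw [aux_softmax_single, aux_softmax_single]
    by_cases hki : k = i
    · have hkj : ¬ (k = j) := by rw [hki]; exact hij
      simp only [if_pos hki, if_neg hkj]
      rw [halg]
      simp only [gI]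
      congr 1 <;> ring
    · by_cases hkj : k = j
      · simp only [if_neg hki, if_pos hkj]
        rw [halg]
        simp only [gJ]
        congr 1 <;> ring
      · simp only [if_neg hki, if_neg hkj]
        rw [halg]
        simp only [gO]
        congr 1 <;> ring
  have hfun : (fun m => η * ((1 - softmax (η • (Pi.single i 1 : Fin B → ℝ)) m) *
          softmax (η • (Pi.single j 1 : Fin B → ℝ)) m))
      = fun k : Fin B => if k = i then gI B η else if k = j then gJ B η else gO B η :=
    funext harg
  rw [nestedSel, hfun]
  simp only [softmax]
  congr 1
  rw [← Finset.sum_erase_add _ _ (Finset.mem_univ i), if_pos rfl]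
  have hjmem : j ∈ Finset.univ.erase i :=
    Finset.mem_erase.mpr ⟨fun h => hij h.symm, Finset.mem_univ j⟩
  rw [← Finset.sum_erase_add _ _ hjmem, if_neg (fun h : j = i => hij h.symm), if_pos rfl]
  have hrest : ∀ k ∈ (Finset.univ.erase i).erase j,
      Real.exp (if k = i then gI B η else if k = j then gJ B η else gO B η)
        = Real.exp (gO B η) := by
    intro k hk
    rw [Finset.mem_erase, Finset.mem_erase] at hk
    rw [if_neg hk.2.1, if_neg hk.1]
  rw [Finset.sum_congr rfl hrest, Finset.sum_const]
  have hcard : ((Finset.univ.erase i).erase j).card = B - 2 := by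
    rw [Finset.card_erase_of_mem hjmem, Finset.card_erase_of_mem (Finset.mem_univ i),
      Finset.card_univ, Fintype.card_fin]
    omega
  rw [hcard, nsmul_eq_mul]
  have : ((B - 2 : ℕ) : ℝ) = (B:ℝ) - 2 := by
    rw [Nat.cast_sub hB]; norm_num
  rw [this]; ring

lemma bound_tendsto : Tendsto (fun η : ℝ => η * Real.exp (-η)) atTop (nhds 0) := by
  simpa using Real.tendsto_pow_mul_exp_neg_atTop_nhds_zero 1

lemma gI_tendsto (B : ℕ) (hB : 2 ≤ B) :
    Tendsto (gI B) atTop (nhds 0) := by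
  have hBR : (2:ℝ) ≤ (B:ℝ) := by exact_mod_cast hB
  have hub : Tendsto (fun η : ℝ => ((B:ℝ) - 1) * (η * Real.exp (-η))) atTop (nhds 0) := by
    simpa using bound_tendsto.const_mul ((B:ℝ) - 1)
  apply tendsto_of_tendsto_of_tendsto_of_le_of_le' tendsto_const_nhds hub
  · filter_upwards [eventually_ge_atTop (0:ℝ)] with η hη
    have hX : (0:ℝ) < Real.exp η + (B:ℝ) - 1 := by
      have := Real.exp_pos η; linarith
    exact div_nonneg (mul_nonneg hη (by linarith)) (by positivity)
  · filter_upwards [eventually_ge_atTop (0:ℝ)] with η hη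
    have he : (1:ℝ) ≤ Real.exp η := Real.one_le_exp hη
    have hX : Real.exp η ≤ Real.exp η + (B:ℝ) - 1 := by linarith
    have hX2 : Real.exp η ≤ (Real.exp η + (B:ℝ) - 1) ^ 2 := by nlinarith
    calc η * ((B:ℝ) - 1) / (Real.exp η + (B:ℝ) - 1) ^ 2
        ≤ η * ((B:ℝ) - 1) / Real.exp η :=
          div_le_div₀ (mul_nonneg hη (by linarith)) le_rfl (Real.exp_pos η) hX2
      _ = ((B:ℝ) - 1) * (η * Real.exp (-η)) := by rw [Real.exp_neg]; ring

lemma gO_tendsto (B : ℕ) (hB : 2 ≤ B) :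
    Tendsto (gO B) atTop (nhds 0) := by
  have hBR : (2:ℝ) ≤ (B:ℝ) := by exact_mod_cast hB
  apply tendsto_of_tendsto_of_tendsto_of_le_of_le' tendsto_const_nhds bound_tendsto
  · filter_upwards [eventually_ge_atTop (0:ℝ)] with η hη
    have he : (1:ℝ) ≤ Real.exp η := Real.one_le_exp hη
    have hX : (0:ℝ) < Real.exp η + (B:ℝ) - 1 := by linarith
    exact div_nonneg (mul_nonneg hη (by linarith)) (by positivity)
  · filter_upwards [eventually_ge_atTop (0:ℝ)] with η hη
    have he : (1:ℝ) ≤ Real.exp η := Real.one_le_exp hη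
    have hX : (0:ℝ) < Real.exp η + (B:ℝ) - 1 := by linarith
    have h1 : (Real.exp η + (B:ℝ) - 2) * Real.exp η ≤ (Real.exp η + (B:ℝ) - 1) ^ 2 := by
      nlinarith [mul_le_mul_of_nonneg_right
        (show Real.exp η + (B:ℝ) - 2 ≤ Real.exp η + (B:ℝ) - 1 by linarith)
        (le_of_lt (Real.exp_pos η))]
    have key : η * (Real.exp η + (B:ℝ) - 2) * Real.exp η
        ≤ η * (Real.exp η + (B:ℝ) - 1) ^ 2 := by
      calc η * (Real.exp η + (B:ℝ) - 2) * Real.exp η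
          = η * ((Real.exp η + (B:ℝ) - 2) * Real.exp η) := by ring
        _ ≤ η * (Real.exp η + (B:ℝ) - 1) ^ 2 := mul_le_mul_of_nonneg_left h1 hη
    calc η * (Real.exp η + (B:ℝ) - 2) / (Real.exp η + (B:ℝ) - 1) ^ 2
        ≤ η / Real.exp η := by
          rw [div_le_div_iff₀ (by positivity) (Real.exp_pos η)]
          nlinarith
      _ = η * Real.exp (-η) := by rw [Real.exp_neg, div_eq_mul_inv]

lemma gJ_tendsto (B : ℕ) (hB : 2 ≤ B) :
    Tendsto (gJ B) atTop atTop := by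
  have hBR : (2:ℝ) ≤ (B:ℝ) := by exact_mod_cast hB
  refine tendsto_atTop_mono' atTop ?_
    (Tendsto.atTop_div_const (by norm_num : (0:ℝ) < 4) tendsto_id)
  filter_upwards [eventually_ge_atTop (0:ℝ),
    Real.tendsto_exp_atTop.eventually_ge_atTop ((B:ℝ) - 1)] with η hη hB1
  have he : (1:ℝ) ≤ Real.exp η := Real.one_le_exp hη
  have hX : (0:ℝ) < Real.exp η + (B:ℝ) - 1 := by linarith
  show η / 4 ≤ η * (Real.exp η * (Real.exp η + (B:ℝ) - 2)) / (Real.exp η + (B:ℝ) - 1) ^ 2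
  rw [div_le_div_iff₀ (by norm_num : (0:ℝ) < 4) (by positivity)]
  have h2 : (Real.exp η + (B:ℝ) - 1) ^ 2 ≤ 4 * (Real.exp η * (Real.exp η + (B:ℝ) - 2)) := by
    nlinarith [mul_nonneg (sub_nonneg.2 hB1)
        (show (0:ℝ) ≤ 3 * Real.exp η + ((B:ℝ) - 1) by linarith),
      mul_nonneg (le_of_lt (Real.exp_pos η)) (show (0:ℝ) ≤ (B:ℝ) - 2 by linarith)]
  have h3 := mul_le_mul_of_nonneg_left h2 hη
  nlinarith [h3]

theorem nested_softmax_limit (B : ℕ) (hB : 2 ≤ B) (i j : Fin B) (hij : i ≠ j) :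
    (∀ η : ℝ,
      nestedSel B η i j j =
        Real.exp (η * (Real.exp η * (Real.exp η + (B : ℝ) - 2)) /
            (Real.exp η + (B : ℝ) - 1) ^ 2) /
          (Real.exp (η * ((B : ℝ) - 1) / (Real.exp η + (B : ℝ) - 1) ^ 2) +
            Real.exp (η * (Real.exp η * (Real.exp η + (B : ℝ) - 2)) /
              (Real.exp η + (B : ℝ) - 1) ^ 2) +
            ((B : ℝ) - 2) *
              Real.exp (η * (Real.exp η + (B : ℝ) - 2) /
                (Real.exp η + (B : ℝ) - 1) ^ 2))) ∧
    Tendsto (fun η : ℝ => nestedSel B η i j j) atTop (nhds 1) ∧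
    Tendsto (fun η : ℝ =>
        ∑ m, |nestedSel B η i j m - (Pi.single j 1 : Fin B → ℝ) m|)
      atTop (nhds 0) := by
  have hji : ¬ (j = i) := fun h => hij h.symm
  have hform : ∀ η : ℝ, nestedSel B η i j j =
      Real.exp (gJ B η) /
        (Real.exp (gI B η) + Real.exp (gJ B η) + ((B:ℝ) - 2) * Real.exp (gO B η)) := by
    intro η
    rw [nestedSel_eq B hB i j hij η j, if_neg hji, if_pos rfl]
  -- Part 2
  have hIJ : Tendsto (fun η => gI B η - gJ B η) atTop atBot := by
    have h1 : ∀ᶠ η : ℝ in atTop, gI B η ≤ 1 :=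
      ((gI_tendsto B hB).eventually_le_const (by norm_num : (0:ℝ) < 1))
    have h2 : Tendsto (fun η => -(gJ B η)) atTop atBot :=
      tendsto_neg_atTop_atBot.comp (gJ_tendsto B hB)
    have := tendsto_atBot_add_left_of_ge' atTop 1 h1 h2
    simpa [sub_eq_add_neg] using this
  have hOJ : Tendsto (fun η => gO B η - gJ B η) atTop atBot := by
    have h1 : ∀ᶠ η : ℝ in atTop, gO B η ≤ 1 :=
      ((gO_tendsto B hB).eventually_le_const (by norm_num : (0:ℝ) < 1))
    have h2 : Tendsto (fun η => -(gJ B η)) atTop atBot :=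
      tendsto_neg_atTop_atBot.comp (gJ_tendsto B hB)
    have := tendsto_atBot_add_left_of_ge' atTop 1 h1 h2
    simpa [sub_eq_add_neg] using this
  have hD : Tendsto (fun η => Real.exp (gI B η - gJ B η) + 1
      + ((B:ℝ) - 2) * Real.exp (gO B η - gJ B η)) atTop (nhds 1) := by
    have e1 : Tendsto (fun η => Real.exp (gI B η - gJ B η)) atTop (nhds 0) :=
      Real.tendsto_exp_atBot.comp hIJ
    have e2 : Tendsto (fun η => Real.exp (gO B η - gJ B η)) atTop (nhds 0) :=
      Real.tendsto_exp_atBot.comp hOJ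
    have := (e1.add (tendsto_const_nhds : Tendsto (fun _ : ℝ => (1:ℝ)) atTop (nhds 1))).add
      (e2.const_mul ((B:ℝ) - 2))
    simpa using this
  have heqD : ∀ η : ℝ, nestedSel B η i j j =
      1 / (Real.exp (gI B η - gJ B η) + 1 + ((B:ℝ) - 2) * Real.exp (gO B η - gJ B η)) := by
    intro η
    rw [hform η]
    have hden : Real.exp (gI B η) + Real.exp (gJ B η) + ((B:ℝ) - 2) * Real.exp (gO B η)
        = (Real.exp (gI B η - gJ B η) + 1 + ((B:ℝ) - 2) * Real.exp (gO B η - gJ B η))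
            * Real.exp (gJ B η) := by
      simp only [Real.exp_sub]
      field_simp
    rw [hden, mul_comm, div_mul_eq_div_div, div_self (Real.exp_ne_zero _)]
  have part2 : Tendsto (fun η : ℝ => nestedSel B η i j j) atTop (nhds 1) := by
    have h1D : Tendsto (fun η => 1 / (Real.exp (gI B η - gJ B η) + 1
        + ((B:ℝ) - 2) * Real.exp (gO B η - gJ B η))) atTop (nhds 1) := by
      have := hD.inv₀ one_ne_zero
      simpa [one_div] using this
    exact h1D.congr (fun η => (heqD η).symm)
  -- Part 3
  have hnn : ∀ η (m : Fin B), 0 ≤ nestedSel B η i j m := by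
    intro η m
    unfold nestedSel softmax
    exact div_nonneg (Real.exp_pos _).le
      (Finset.sum_nonneg fun k _ => (Real.exp_pos _).le)
  have hsum1 : ∀ η : ℝ, ∑ m, nestedSel B η i j m = 1 := fun η => aux_softmax_sum_one j _
  have hle1 : ∀ η : ℝ, nestedSel B η i j j ≤ 1 := by
    intro η
    rw [← hsum1 η]
    exact Finset.single_le_sum (fun k _ => hnn η k) (Finset.mem_univ j)
  have h3eq : ∀ η : ℝ, ∑ m, |nestedSel B η i j m - (Pi.single j 1 : Fin B → ℝ) m|
      = 2 * (1 - nestedSel B η i j j) := by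
    intro η
    rw [← Finset.sum_erase_add _ _ (Finset.mem_univ j)]
    have hterm : |nestedSel B η i j j - (Pi.single j 1 : Fin B → ℝ) j|
        = 1 - nestedSel B η i j j := by
      rw [Pi.single_eq_same, abs_of_nonpos (by linarith [hle1 η])]
      ring
    have hrest : ∀ k ∈ Finset.univ.erase j,
        |nestedSel B η i j k - (Pi.single j 1 : Fin B → ℝ) k| = nestedSel B η i j k := by
      intro k hk
      rw [Pi.single_eq_of_ne (Finset.mem_erase.mp hk).1, sub_zero,
        abs_of_nonneg (hnn η k)]
    rw [Finset.sum_congr rfl hrest, hterm]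
    have := Finset.sum_erase_add Finset.univ (nestedSel B η i j) (Finset.mem_univ j)
    rw [hsum1 η] at this
    linarith
  have part3 : Tendsto (fun η : ℝ =>
      ∑ m, |nestedSel B η i j m - (Pi.single j 1 : Fin B → ℝ) m|) atTop (nhds 0) := by
    have : Tendsto (fun η : ℝ => 2 * (1 - nestedSel B η i j j)) atTop (nhds 0) := by
      have := ((tendsto_const_nhds : Tendsto (fun _ : ℝ => (1:ℝ)) atTop (nhds 1)).sub
        part2).const_mul (2:ℝ)
      simpa using this
    exact this.congr (fun η => (h3eq η).symm)
  refine ⟨fun η => ?_, part2, part3⟩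
  rw [hform η]
  simp only [gI, gJ, gO]
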